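/- On the set of probability vectors in ℝᵐ, the Bhattacharyya angle d(p,q) = 2·arccos(BC(p,q)), where BC(p,q) = Σ_i √(p(i)·q(i)), is a metric: it is nonnegative, d(p,q) = d(q,p), d(p,q) = 0 if and only if p = q, and d(p,s) ≤ d(p,q) + d(q,s) for all probability vectors p, q, s in ℝᵐ. -/

import Mathlib

open BigOperators

/-- A probability vector in `ℝᵐ`: nonnegative entries summing to `1`. -/
def IsProbVec {m : ℕ} (p : Fin m → ℝ) : Prop :=
  (∀ i, 0 ≤ p i) ∧ ∑ i, p i = 1

/-- The Bhattacharyya angle `d(p,q) = 2 · arccos (Σ_i √(p i · q i))`. -/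
noncomputable def bhatAngle {m : ℕ} (p q : Fin m → ℝ) : ℝ :=
  2 * Real.arccos (∑ i, Real.sqrt (p i * q i))

lemma arccos_antitone : Antitone Real.arccos := fun x y h => by
  unfold Real.arccos; linarith [Real.monotone_arcsin h]

/-- Spherical triangle inequality for unit vectors in a real inner product space. -/
lemma arccos_inner_triangle {E : Type*} [NormedAddCommGroup E] [InnerProductSpace ℝ E]
    (u v w : E) (hu : ‖u‖ = 1) (hv : ‖v‖ = 1) (hw : ‖w‖ = 1) :
    Real.arccos (inner ℝ u w : ℝ) ≤ Real.arccos (inner ℝ u v : ℝ) + Real.arccos (inner ℝ v w : ℝ) := by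
  set a : ℝ := inner ℝ u v
  set b : ℝ := inner ℝ v w
  set c : ℝ := inner ℝ u w
  have ha : |a| ≤ 1 := by simpa [a, hu, hv] using abs_real_inner_le_norm u v
  have hb : |b| ≤ 1 := by simpa [b, hv, hw] using abs_real_inner_le_norm v w
  have hvv : (inner ℝ v v : ℝ) = 1 := by
    rw [real_inner_self_eq_norm_sq, hv]; norm_num
  have h1 : (inner ℝ (u - a • v) (w - b • v) : ℝ) = c - a * b := by
    simp only [inner_sub_left, inner_sub_right, real_inner_smul_left, real_inner_smul_right,
      hvv]
    have : (inner ℝ v w : ℝ) = b := rfl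
    have h' : (inner ℝ v u : ℝ) = a := real_inner_comm u v ▸ rfl
    show c - a * b - (b * a - b * (a * 1)) = c - a * b
    ring
  have hnu : ‖u - a • v‖ = Real.sqrt (1 - a ^ 2) := by
    rw [← Real.sqrt_sq (norm_nonneg _)]
    congr 1
    rw [← real_inner_self_eq_norm_sq]
    simp only [inner_sub_left, inner_sub_right, real_inner_smul_left, real_inner_smul_right, hvv]
    have h' : (inner ℝ v u : ℝ) = a := real_inner_comm u v ▸ rfl
    have h'' : (inner ℝ u u : ℝ) = 1 := by rw [real_inner_self_eq_norm_sq, hu]; norm_num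
    rw [h', h'']
    show (1 : ℝ) - a * a - (a * a - a * (a * 1)) = 1 - a ^ 2
    ring
  have hnw : ‖w - b • v‖ = Real.sqrt (1 - b ^ 2) := by
    rw [← Real.sqrt_sq (norm_nonneg _)]
    congr 1
    rw [← real_inner_self_eq_norm_sq]
    simp only [inner_sub_left, inner_sub_right, real_inner_smul_left, real_inner_smul_right, hvv]
    have h' : (inner ℝ v w : ℝ) = b := rfl
    have h'' : (inner ℝ w v : ℝ) = b := real_inner_comm v w ▸ rfl
    have h3 : (inner ℝ w w : ℝ) = 1 := by rw [real_inner_self_eq_norm_sq, hw]; norm_num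
    rw [h', h'', h3]
    show (1 : ℝ) - b * b - (b * b - b * (b * 1)) = 1 - b ^ 2
    ring
  have hlow : a * b - Real.sqrt (1 - a ^ 2) * Real.sqrt (1 - b ^ 2) ≤ c := by
    have := abs_real_inner_le_norm (u - a • v) (w - b • v)
    rw [h1, hnu, hnw] at this
    have := neg_abs_le (c - a * b)
    nlinarith [abs_real_inner_le_norm (u - a • v) (w - b • v), hnu, hnw]
  have hcos : Real.cos (Real.arccos a + Real.arccos b) ≤ c := by
    rw [Real.cos_add, Real.cos_arccos (by linarith [abs_le.1 ha]) (by linarith [abs_le.1 ha]),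
      Real.cos_arccos (by linarith [abs_le.1 hb]) (by linarith [abs_le.1 hb]),
      Real.sin_arccos, Real.sin_arccos]
    linarith
  by_cases hπ : Real.arccos a + Real.arccos b ≤ Real.pi
  · calc Real.arccos c ≤ Real.arccos (Real.cos (Real.arccos a + Real.arccos b)) :=
        arccos_antitone hcos
      _ = Real.arccos a + Real.arccos b := Real.arccos_cos
          (by linarith [Real.arccos_nonneg a, Real.arccos_nonneg b]) hπ
  · linarith [Real.arccos_le_pi c]

/-- the Bhattacharyya angle is a metric on the set of probability
vectors in `ℝᵐ`. -/
theorem stmt_8 (m : ℕ) :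
    (∀ p q : Fin m → ℝ, IsProbVec p → IsProbVec q → 0 ≤ bhatAngle p q) ∧
    (∀ p q : Fin m → ℝ, IsProbVec p → IsProbVec q → bhatAngle p q = bhatAngle q p) ∧
    (∀ p q : Fin m → ℝ, IsProbVec p → IsProbVec q → (bhatAngle p q = 0 ↔ p = q)) ∧
    (∀ p q s : Fin m → ℝ, IsProbVec p → IsProbVec q → IsProbVec s →
      bhatAngle p s ≤ bhatAngle p q + bhatAngle q s) := by
  -- the square-root embedding into the unit sphere of Euclidean space
  let sv : (Fin m → ℝ) → EuclideanSpace ℝ (Fin m) := fun p => WithLp.toLp 2 (fun i => Real.sqrt (p i))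
  have hinner : ∀ p q : Fin m → ℝ, (∀ i, 0 ≤ p i) →
      (inner ℝ (sv p) (sv q) : ℝ) = ∑ i, Real.sqrt (p i * q i) := by
    intro p q hp
    rw [PiLp.inner_apply]
    refine Finset.sum_congr rfl fun i _ => ?_
    rw [RCLike.inner_apply, starRingEnd_apply, star_trivial, Real.sqrt_mul (hp i)]; exact mul_comm _ _
  have hnorm : ∀ p : Fin m → ℝ, IsProbVec p → ‖sv p‖ = 1 := by
    intro p hp
    rw [EuclideanSpace.norm_eq]
    have : ∀ i, Real.sqrt (p i) ^ 2 = p i := fun i => Real.sq_sqrt (hp.1 i)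
    simp only [sv, WithLp.ofLp_toLp, Real.norm_eq_abs, sq_abs, this, hp.2, Real.sqrt_one]
  refine ⟨?_, ?_, ?_, ?_⟩
  · intro p q _ _
    unfold bhatAngle
    linarith [Real.arccos_nonneg (∑ i, Real.sqrt (p i * q i))]
  · intro p q _ _
    unfold bhatAngle
    congr 1
    exact congrArg _ (Finset.sum_congr rfl fun i _ => by rw [mul_comm])
  · intro p q hp hq
    unfold bhatAngle
    constructor
    · intro h
      have h0 : Real.arccos (∑ i, Real.sqrt (p i * q i)) = 0 := by linarith
      rw [Real.arccos_eq_zero] at h0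
      have hle : (inner ℝ (sv p) (sv q) : ℝ) ≤ 1 := by
        have := real_inner_le_norm (sv p) (sv q)
        rwa [hnorm p hp, hnorm q hq, one_mul] at this
      have heq : (inner ℝ (sv p) (sv q) : ℝ) = 1 := le_antisymm hle (by rwa [hinner p q hp.1])
      have : sv p = sv q := (inner_eq_one_iff_of_norm_eq_one (hnorm p hp) (hnorm q hq)).1 heq
      funext i
      have hi : Real.sqrt (p i) = Real.sqrt (q i) := congrArg (fun x : EuclideanSpace ℝ (Fin m) => x i) this
      have := congrArg (· ^ 2) hi
      simpa [Real.sq_sqrt (hp.1 i), Real.sq_sqrt (hq.1 i)] using this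
    · intro h
      subst h
      have : ∑ i, Real.sqrt (p i * p i) = 1 := by
        rw [← hp.2]
        exact Finset.sum_congr rfl fun i _ => Real.sqrt_mul_self (hp.1 i)
      rw [this, Real.arccos_one, mul_zero]
  · intro p q s hp hq hs
    unfold bhatAngle
    have h := arccos_inner_triangle (sv p) (sv q) (sv s)
      (hnorm p hp) (hnorm q hq) (hnorm s hs)
    rw [hinner p q hp.1, hinner q s hq.1, hinner p s hp.1] at h
    linarith
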